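/- Let V and W be complex vector spaces and A, C : V →ₗ[ℂ] V, B, D : W →ₗ[ℂ] W linear maps. Suppose A ∘ C = −(C ∘ A), C ∘ A ≠ 0, and the operators TensorProduct.map A B and TensorProduct.map C D on V ⊗ W commute. Then B ∘ D = −(D ∘ B). -/
import Mathlib

open scoped TensorProduct

/-- if `A ⊗ B` and `C ⊗ D` commute while `A` and `C` anticommute
(with `C ∘ A ≠ 0`), then `B` and `D` anticommute. -/
theorem second_factors_anticommute {V W : Type*}
    [AddCommGroup V] [Module ℂ V] [AddCommGroup W] [Module ℂ W]
    (A C : V →ₗ[ℂ] V) (B D : W →ₗ[ℂ] W)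
    (hAC : A ∘ₗ C = -(C ∘ₗ A)) (hCA : C ∘ₗ A ≠ 0)
    (hcomm : TensorProduct.map A B ∘ₗ TensorProduct.map C D =
      TensorProduct.map C D ∘ₗ TensorProduct.map A B) :
    B ∘ₗ D = -(D ∘ₗ B) := by
  have key : ∀ (v : V) (w : W),
      (C (A v)) ⊗ₜ[ℂ] ((B (D w)) + (D (B w))) = 0 := by
    intro v w
    have h1 := congrArg (fun f => f (v ⊗ₜ[ℂ] w)) hcomm
    simp only [LinearMap.comp_apply, TensorProduct.map_tmul] at h1
    have h2 : A (C v) = -(C (A v)) := by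
      have := congrArg (fun f => f v) hAC
      simpa using this
    rw [h2, TensorProduct.neg_tmul] at h1
    rw [TensorProduct.tmul_add]
    have := congrArg (fun x => x + C (A v) ⊗ₜ[ℂ] B (D w)) h1
    simpa [add_comm] using this.symm.trans (by abel)
  obtain ⟨v0, hv0⟩ : ∃ v0, C (A v0) ≠ 0 := by
    by_contra h
    push_neg at h
    exact hCA (LinearMap.ext fun v => by simpa using h v)
  obtain ⟨f, hf⟩ : ∃ f : V →ₗ[ℂ] ℂ, f (C (A v0)) ≠ 0 := by
    by_contra h
    push_neg at h
    exact hv0 ((Module.forall_dual_apply_eq_zero_iff ℂ _).mp h)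
  ext w
  have hk := key v0 w
  have := congrArg (fun x => TensorProduct.lid ℂ W (f.rTensor W x)) hk
  simp only [LinearMap.comp_apply, LinearMap.rTensor_tmul, map_zero,
    TensorProduct.lid_tmul] at this
  have hzero : B (D w) + D (B w) = 0 := by
    have := smul_eq_zero.mp this
    tauto
  simp only [LinearMap.comp_apply, LinearMap.neg_apply]
  exact eq_neg_of_add_eq_zero_left hzero
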